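/- Let M be a smooth manifold, n ≥ 1, and let {·,·} be an affine Jacobi bracket on the trivial bundle M×ℝⁿ. Then for any two basic functions F,G ∈ C^∞(M×ℝⁿ,ℝ), the function {F,G} is basic and {F,G} = F·{1,G} + G·{F,1}. -/

import Mathlib

open scoped Manifold

/-- A Jacobi bracket on the smooth functions (those satisfying the predicate `S`)
of a space `N`: an ℝ-bilinear antisymmetric bracket satisfying the Jacobi identity
and the generalized Leibniz rule. -/
structure JacobiBracket (N : Type*) (S : (N → ℝ) → Prop) where
  br : (N → ℝ) → (N → ℝ) → N → ℝ
  smooth_br : ∀ f g, S f → S g → S (br f g)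
  add_left : ∀ f g h, S f → S g → S h → br (f + g) h = br f h + br g h
  smul_left : ∀ (c : ℝ) (f g : N → ℝ), S f → S g → br (c • f) g = c • br f g
  antisymm : ∀ f g, S f → S g → br f g = -br g f
  jacobi : ∀ f g h, S f → S g → S h →
    br f (br g h) + br g (br h f) + br h (br f g) = 0
  leibniz : ∀ f g h, S f → S g → S h →
    br f (g * h) = br f g * h + g * br f h - g * h * br f 1

/-- A function on the trivial bundle `M × ℝⁿ` is fibrewise affine if on each fibre
it is an affine map `ℝⁿ → ℝ`. -/
def IsFibAffine {M : Type*} {n : ℕ} (F : M × (Fin n → ℝ) → ℝ) : Prop :=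
  ∀ x : M, ∃ (μ : (Fin n → ℝ) →ₗ[ℝ] ℝ) (c : ℝ), ∀ v, F (x, v) = μ v + c

section

variable {EM : Type*} [NormedAddCommGroup EM] [NormedSpace ℝ EM] [FiniteDimensional ℝ EM]
  {HM : Type*} [TopologicalSpace HM] (IM : ModelWithCorners ℝ EM HM)
  (M : Type*) [TopologicalSpace M] [ChartedSpace HM M] [IsManifold IM ((⊤ : ℕ∞) : WithTop ℕ∞) M]
  (n : ℕ)

/-- Smooth real functions on the total space of the trivial bundle `M × ℝⁿ`. -/
def SmoothBdl : (M × (Fin n → ℝ) → ℝ) → Prop :=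
  fun F => ContMDiff (IM.prod (𝓘(ℝ, Fin n → ℝ))) 𝓘(ℝ, ℝ) (⊤ : ℕ∞) F

/-- Basic functions on the trivial bundle `M × ℝⁿ`: pullbacks of smooth functions
on `M` by the projection. -/
def IsBasic : (M × (Fin n → ℝ) → ℝ) → Prop :=
  fun F => ∃ f : M → ℝ, ContMDiff IM 𝓘(ℝ, ℝ) (⊤ : ℕ∞) f ∧ F = fun p => f p.1

end


lemma single_smul_one {n : ℕ} (j : Fin n) (t : ℝ) :
    (Pi.single j t : Fin n → ℝ) = t • (Pi.single j 1 : Fin n → ℝ) := by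
  ext k
  by_cases h : k = j <;> simp [Pi.single_apply, h]

lemma affine_line {M : Type*} {n : ℕ} {φ : M × (Fin n → ℝ) → ℝ} (h : IsFibAffine φ)
    (x : M) (j : Fin n) : ∃ A B : ℝ, ∀ t : ℝ, φ (x, Pi.single j t) = A * t + B := by
  obtain ⟨μ, c, hμ⟩ := h x
  refine ⟨μ (Pi.single j 1), c, fun t => ?_⟩
  rw [hμ, single_smul_one, map_smul, smul_eq_mul]
  ring

lemma isFibAffine_basic {M : Type*} {n : ℕ} (f : M → ℝ) :
    IsFibAffine (fun p : M × (Fin n → ℝ) => f p.1) := fun x => ⟨0, f x, by simp⟩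

lemma isFibAffine_one {M : Type*} {n : ℕ} :
    IsFibAffine (1 : M × (Fin n → ℝ) → ℝ) := fun x => ⟨0, 1, by simp⟩

lemma isFibAffine_coord {M : Type*} {n : ℕ} (j : Fin n) :
    IsFibAffine (fun p : M × (Fin n → ℝ) => p.2 j) := fun x => ⟨LinearMap.proj j, 0, by simp⟩

lemma isFibAffine_coord_mul_basic {M : Type*} {n : ℕ} (j : Fin n) (f : M → ℝ) :
    IsFibAffine ((fun p : M × (Fin n → ℝ) => p.2 j) * fun p => f p.1) :=
  fun x => ⟨f x • LinearMap.proj j, 0, by intro v; simp [mul_comm]⟩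

lemma quad_coeff_zero {a b c d e : ℝ} (h : ∀ t : ℝ, a * t ^ 2 + b * t + c = d * t + e) :
    a = 0 := by
  have h0 := h 0; have h1 := h 1; have h2 := h (-1)
  norm_num at h0 h1 h2
  linarith

lemma lin_zero_of_single {n : ℕ} (μ : (Fin n → ℝ) →ₗ[ℝ] ℝ)
    (h : ∀ j : Fin n, μ (Pi.single j 1) = 0) (v : Fin n → ℝ) : μ v = 0 := by
  have hv : v = ∑ j : Fin n, Pi.single j (v j) := by
    simp [Finset.univ_sum_single]
  rw [hv, map_sum]
  refine Finset.sum_eq_zero fun j _ => ?_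
  rw [single_smul_one, map_smul, h j, smul_zero]

/-- Fibrewise constancy of `{A,B} - b⬝{A,1}` for basic `A = a∘π`, `B = b∘π`. -/
lemma fcX
    {EM : Type*} [NormedAddCommGroup EM] [NormedSpace ℝ EM] [FiniteDimensional ℝ EM]
    {HM : Type*} [TopologicalSpace HM] (IM : ModelWithCorners ℝ EM HM)
    (M : Type*) [TopologicalSpace M] [ChartedSpace HM M] [IsManifold IM ((⊤ : ℕ∞) : WithTop ℕ∞) M]
    (n : ℕ)
    (J : JacobiBracket (M × (Fin n → ℝ)) (SmoothBdl IM M n))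
    (haff : ∀ a b, SmoothBdl IM M n a → SmoothBdl IM M n b →
      IsFibAffine a → IsFibAffine b → IsFibAffine (J.br a b))
    (a b : M → ℝ) (ha : ContMDiff IM 𝓘(ℝ, ℝ) (⊤ : ℕ∞) a) (hb : ContMDiff IM 𝓘(ℝ, ℝ) (⊤ : ℕ∞) b)
    (x : M) (v : Fin n → ℝ) :
    J.br (fun p => a p.1) (fun p => b p.1) (x, v) - b x * J.br (fun p => a p.1) 1 (x, v)
      = J.br (fun p => a p.1) (fun p => b p.1) (x, 0)
        - b x * J.br (fun p => a p.1) 1 (x, 0) := by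
  set A : M × (Fin n → ℝ) → ℝ := fun p => a p.1 with hAdef
  set B : M × (Fin n → ℝ) → ℝ := fun p => b p.1 with hBdef
  have hA : SmoothBdl IM M n A := ha.comp contMDiff_fst
  have hB : SmoothBdl IM M n B := hb.comp contMDiff_fst
  have h1 : SmoothBdl IM M n (1 : M × (Fin n → ℝ) → ℝ) := contMDiff_const
  obtain ⟨μ₁, c₁, hμ₁⟩ := haff A B hA hB (isFibAffine_basic a) (isFibAffine_basic b) x
  obtain ⟨μ₂, c₂, hμ₂⟩ := haff A 1 hA h1 (isFibAffine_basic a) isFibAffine_one x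
  have key : ∀ j : Fin n, μ₁ (Pi.single j 1) - b x * μ₂ (Pi.single j 1) = 0 := by
    intro j
    set u : M × (Fin n → ℝ) → ℝ := fun p => p.2 j with hudef
    have hu : SmoothBdl IM M n u :=
      (ContinuousLinearMap.proj j : (Fin n → ℝ) →L[ℝ] ℝ).contMDiff.comp contMDiff_snd
    obtain ⟨A₃, B₃, h₃⟩ := affine_line
      (haff A (u * B) hA (hu.mul hB) (isFibAffine_basic a)
        (isFibAffine_coord_mul_basic j b)) x j
    obtain ⟨A₄, B₄, h₄⟩ := affine_line
      (haff A u hA hu (isFibAffine_basic a) (isFibAffine_coord j)) x j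
    refine quad_coeff_zero (a := μ₁ (Pi.single j 1) - b x * μ₂ (Pi.single j 1))
      (b := c₁ - b x * c₂) (c := 0) (d := A₃ - b x * A₄) (e := B₃ - b x * B₄) ?_
    intro t
    have e := congrFun (J.leibniz A u B hA hu hB) (x, Pi.single j t)
    simp only [Pi.mul_apply, Pi.sub_apply, Pi.add_apply] at e
    have hut : u (x, Pi.single j t) = t := by simp [hudef]
    have hBt : B (x, Pi.single j t) = b x := rfl
    have m1 : μ₁ (Pi.single j t) = t * μ₁ (Pi.single j 1) := by
      rw [single_smul_one, map_smul, smul_eq_mul]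
    have m2 : μ₂ (Pi.single j t) = t * μ₂ (Pi.single j 1) := by
      rw [single_smul_one, map_smul, smul_eq_mul]
    rw [h₃, h₄, hut, hBt, hμ₁, hμ₂, m1, m2] at e
    linear_combination -e
  have hν : μ₁ v - b x * μ₂ v = 0 := by
    have := lin_zero_of_single (μ₁ - b x • μ₂) (by intro j; simpa using key j) v
    simpa using this
  rw [hμ₁ v, hμ₁ 0, hμ₂ v, hμ₂ 0, map_zero, map_zero]
  linear_combination hν

/-- for an affine Jacobi bracket on the trivial bundle `M × ℝⁿ`, `n ≥ 1`,
and any basic functions `F, G`, the bracket `{F,G}` is basic and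
`{F,G} = F⬝{1,G} + G⬝{F,1}`. -/
theorem stmt1
    {EM : Type*} [NormedAddCommGroup EM] [NormedSpace ℝ EM] [FiniteDimensional ℝ EM]
    {HM : Type*} [TopologicalSpace HM] (IM : ModelWithCorners ℝ EM HM)
    (M : Type*) [TopologicalSpace M] [ChartedSpace HM M] [IsManifold IM ((⊤ : ℕ∞) : WithTop ℕ∞) M]
    (n : ℕ) (hn : 1 ≤ n)
    (J : JacobiBracket (M × (Fin n → ℝ)) (SmoothBdl IM M n))
    (haff : ∀ a b, SmoothBdl IM M n a → SmoothBdl IM M n b →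
      IsFibAffine a → IsFibAffine b → IsFibAffine (J.br a b))
    (F G : M × (Fin n → ℝ) → ℝ)
    (hF : SmoothBdl IM M n F) (hFbasic : IsBasic IM M n F)
    (hG : SmoothBdl IM M n G) (hGbasic : IsBasic IM M n G) :
    IsBasic IM M n (J.br F G) ∧
      J.br F G = F * J.br 1 G + G * J.br F 1 := by
  obtain ⟨f, hf, rfl⟩ := hFbasic
  obtain ⟨g, hg, rfl⟩ := hGbasic
  have h1 : SmoothBdl IM M n (1 : M × (Fin n → ℝ) → ℝ) := contMDiff_const
  -- {1,1} = 0 pointwise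
  have h11 : ∀ p, J.br (1 : M × (Fin n → ℝ) → ℝ) 1 p = 0 := by
    intro p
    have := congrFun (J.antisymm 1 1 h1 h1) p
    simp only [Pi.neg_apply] at this
    linarith
  -- fibrewise constancy of {1, b∘π}
  have fc1 : ∀ (b : M → ℝ), ContMDiff IM 𝓘(ℝ, ℝ) (⊤ : ℕ∞) b → ∀ x v,
      J.br 1 (fun p => b p.1) (x, v) = J.br 1 (fun p => b p.1) (x, 0) := by
    intro b hb x v
    have h := fcX IM M n J haff (fun _ => 1) b contMDiff_const hb x v
    have h1eq : (fun p : M × (Fin n → ℝ) => (fun _ : M => (1 : ℝ)) p.1)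
        = (1 : M × (Fin n → ℝ) → ℝ) := rfl
    rw [h1eq, h11 (x, v), h11 (x, 0)] at h
    linarith
  -- fibrewise constancy of {a∘π, 1}
  have fcB1 : ∀ (a : M → ℝ), ContMDiff IM 𝓘(ℝ, ℝ) (⊤ : ℕ∞) a → ∀ x v,
      J.br (fun p => a p.1) 1 (x, v) = J.br (fun p => a p.1) 1 (x, 0) := by
    intro a ha x v
    have hA : SmoothBdl IM M n (fun p : M × (Fin n → ℝ) => a p.1) := ha.comp contMDiff_fst
    have e1 := congrFun (J.antisymm (fun p => a p.1) 1 hA h1) (x, v)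
    have e2 := congrFun (J.antisymm (fun p => a p.1) 1 hA h1) (x, 0)
    simp only [Pi.neg_apply] at e1 e2
    rw [e1, e2, fc1 a ha x v]
  -- fibrewise constancy of {a∘π, b∘π}
  have fcAB : ∀ (a b : M → ℝ), ContMDiff IM 𝓘(ℝ, ℝ) (⊤ : ℕ∞) a → ContMDiff IM 𝓘(ℝ, ℝ) (⊤ : ℕ∞) b →
      ∀ x v, J.br (fun p => a p.1) (fun p => b p.1) (x, v)
        = J.br (fun p => a p.1) (fun p => b p.1) (x, 0) := by
    intro a b ha hb x v
    have h := fcX IM M n J haff a b ha hb x v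
    have h2 := fcB1 a ha x v
    rw [h2] at h
    linarith
  -- the key pointwise identity
  set j0 : Fin n := ⟨0, hn⟩ with hj0
  set u : M × (Fin n → ℝ) → ℝ := fun p => p.2 j0 with hudef
  set Ff : M × (Fin n → ℝ) → ℝ := fun p => f p.1 with hFf
  set Gg : M × (Fin n → ℝ) → ℝ := fun p => g p.1 with hGg
  have hu : SmoothBdl IM M n u :=
    (ContinuousLinearMap.proj j0 : (Fin n → ℝ) →L[ℝ] ℝ).contMDiff.comp contMDiff_snd
  have huF : SmoothBdl IM M n (u * Ff) := hu.mul hF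
  have huG : SmoothBdl IM M n (u * Gg) := hu.mul hG
  have aF : IsFibAffine Ff := isFibAffine_basic f
  have aG : IsFibAffine Gg := isFibAffine_basic g
  have au : IsFibAffine u := isFibAffine_coord j0
  have auF : IsFibAffine (u * Ff) := isFibAffine_coord_mul_basic j0 f
  have auG : IsFibAffine (u * Gg) := isFibAffine_coord_mul_basic j0 g
  have main : ∀ x : M, J.br Gg Ff (x, 0)
      = f x * J.br Gg 1 (x, 0) + g x * J.br 1 Ff (x, 0) := by
    intro x
    obtain ⟨P₁, P₀, hP⟩ := affine_line (haff (u * Ff) (u * Gg) huF huG auF auG) x j0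
    obtain ⟨C₁, C₀, hCu⟩ := affine_line (haff (u * Ff) u huF hu auF au) x j0
    obtain ⟨D₁, D₀, hCv⟩ := affine_line (haff (u * Gg) u huG hu auG au) x j0
    set γ : ℝ := J.br Gg Ff (x, 0) with hγd
    set δ : ℝ := J.br Gg 1 (x, 0) with hδd
    set ε : ℝ := J.br 1 Ff (x, 0) with hεd
    have hiv : ∀ t : ℝ, P₁ * t + P₀ = g x * (C₁ * t + C₀) - f x * (D₁ * t + D₀)
        + t ^ 2 * (-γ + f x * δ + g x * ε) := by
      intro t
      have hut : u (x, Pi.single j0 t) = t := by simp [hudef]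
      have hFt : Ff (x, Pi.single j0 t) = f x := rfl
      have hGt : Gg (x, Pi.single j0 t) = g x := rfl
      have e1 := congrFun (J.leibniz (u * Ff) u Gg huF hu hG) (x, Pi.single j0 t)
      have e4 := congrFun (J.antisymm (u * Ff) Gg huF hG) (x, Pi.single j0 t)
      have e5 := congrFun (J.leibniz Gg u Ff hG hu hF) (x, Pi.single j0 t)
      have e10 := congrFun (J.antisymm Gg u hG hu) (x, Pi.single j0 t)
      have e2G := congrFun (J.antisymm (u * Gg) u huG hu) (x, Pi.single j0 t)
      have e3G := congrFun (J.leibniz u u Gg hu hu hG) (x, Pi.single j0 t)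
      have e9 := congrFun (J.antisymm u 1 hu h1) (x, Pi.single j0 t)
      have e6 := congrFun (J.antisymm (u * Ff) 1 huF h1) (x, Pi.single j0 t)
      have e7 := congrFun (J.leibniz 1 u Ff h1 hu hF) (x, Pi.single j0 t)
      have ehuu : J.br u u (x, Pi.single j0 t) = 0 := by
        have := congrFun (J.antisymm u u hu hu) (x, Pi.single j0 t)
        simp only [Pi.neg_apply] at this; linarith
      have e8 := h11 (x, Pi.single j0 t)
      simp only [Pi.mul_apply, Pi.add_apply, Pi.sub_apply, Pi.neg_apply, Pi.one_apply,
        hut, hFt, hGt] at e1 e4 e5 e10 e2G e3G e9 e6 e7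
      -- fibrewise-constancy rewrites
      have hγ : J.br Gg Ff (x, Pi.single j0 t) = γ := fcAB g f hg hf x _
      have hδ : J.br Gg 1 (x, Pi.single j0 t) = δ := fcB1 g hg x _
      have hε : J.br 1 Ff (x, Pi.single j0 t) = ε := fc1 f hf x _
      rw [hγ, hδ] at e5
      rw [hε] at e7
      rw [hP t] at e1
      rw [hCu t] at e1
      rw [hCv t] at e2G
      linear_combination e1 + t * e4 - t * e5 - f x * t * e10 - f x * e3G + f x * e2G
        + f x * g x * t * e9 - f x * g x * ehuu - g x * t * e6 + g x * t * e7
        - f x * g x * t ^ 2 * e8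
    have h0 := hiv 0
    have hp1 := hiv 1
    have hm1 := hiv (-1)
    norm_num at h0 hp1 hm1
    rw [hγd, hδd, hεd] at *
    linarith
  constructor
  · refine ⟨fun x => J.br Ff Gg (x, 0),
      (J.smooth_br Ff Gg hF hG).comp (contMDiff_id.prodMk contMDiff_const), ?_⟩
    funext p
    obtain ⟨x, v⟩ := p
    exact fcAB f g hf hg x v
  · funext p
    obtain ⟨x, v⟩ := p
    have hL : J.br Ff Gg (x, v) = -J.br Gg Ff (x, 0) := by
      have e := congrFun (J.antisymm Ff Gg hF hG) (x, v)
      simp only [Pi.neg_apply] at e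
      rw [e, fcAB g f hg hf x v]
    have h1G : J.br 1 Gg (x, v) = -J.br Gg 1 (x, 0) := by
      have e := congrFun (J.antisymm (1 : M × (Fin n → ℝ) → ℝ) Gg h1 hG) (x, 0)
      simp only [Pi.neg_apply] at e
      rw [fc1 g hg x v, e]
    have hF1 : J.br Ff 1 (x, v) = -J.br 1 Ff (x, 0) := by
      have e := congrFun (J.antisymm Ff (1 : M × (Fin n → ℝ) → ℝ) hF h1) (x, 0)
      simp only [Pi.neg_apply] at e
      rw [fcB1 f hf x v, e]
    have hm := main x
    simp only [Pi.add_apply, Pi.mul_apply]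
    rw [hL, h1G, hF1]
    have hFv : Ff (x, v) = f x := rfl
    have hGv : Gg (x, v) = g x := rfl
    rw [hFv, hGv]
    linarith
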